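/- Every nonempty symmetric reflection space E of ℤ equals pℤ or p(2ℤ + 1) for some nonnegative integer p. -/

import Mathlib

open Classical in
theorem symmetric_reflection_space_int {E : Set ℤ} (hne : E.Nonempty)
    (hE : ∀ x ∈ E, ∀ y ∈ E, x - 2 • y ∈ E) :
    ∃ p : ℤ, 0 ≤ p ∧ (E = {x : ℤ | p ∣ x} ∨ E = {x : ℤ | ∃ k : ℤ, x = p * (2 * k + 1)}) := by
  have hsub : ∀ x ∈ E, ∀ y ∈ E, x - 2 * y ∈ E := by
    intro x hx y hy
    have := hE x hx y hy
    simpa [two_smul, two_mul] using this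
  have hneg : ∀ x ∈ E, -x ∈ E := by
    intro x hx
    have := hsub x hx x hx
    have h : x - 2 * x = -x := by ring
    rwa [h] at this
  have hadd : ∀ x ∈ E, ∀ y ∈ E, x + 2 * y ∈ E := by
    intro x hx y hy
    have := hsub x hx (-y) (hneg y hy)
    have h : x - 2 * (-y) = x + 2 * y := by ring
    rwa [h] at this
  have hstep : ∀ x ∈ E, ∀ y ∈ E, ∀ k : ℤ, x + 2 * k * y ∈ E := by
    intro x hx y hy k
    induction k using Int.induction_on with
    | zero => simpa using hx
    | succ n ih =>
        have := hadd _ ih y hy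
        have h : x + 2 * n * y + 2 * y = x + 2 * (n + 1) * y := by ring
        rwa [h] at this
    | pred n ih =>
        have := hsub _ ih y hy
        have h : x + 2 * (-n) * y - 2 * y = x + 2 * (-n - 1) * y := by ring
        rwa [h] at this
  by_cases h0 : ∀ x ∈ E, x = 0
  · refine ⟨0, le_refl 0, Or.inl ?_⟩
    ext x
    simp only [Set.mem_setOf_eq, zero_dvd_iff]
    constructor
    · exact h0 x
    · rintro rfl
      obtain ⟨a, ha⟩ := hne
      have := h0 a ha
      rwa [this] at ha
  · push_neg at h0
    obtain ⟨a, ha, ha0⟩ := h0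
    have hex : ∃ n : ℕ, 0 < n ∧ (n : ℤ) ∈ E := by
      refine ⟨a.natAbs, Int.natAbs_pos.mpr ha0, ?_⟩
      rcases Int.natAbs_eq a with h | h
      · rwa [← h]
      · rw [← Int.neg_eq_comm.mp h.symm]; exact hneg a ha
    set dn := Nat.find hex with hdn
    obtain ⟨hdpos, hdmem⟩ := Nat.find_spec hex
    set d : ℤ := (dn : ℤ) with hd
    have hdpos' : 0 < d := by rw [hd, hdn]; exact_mod_cast hdpos
    have hmin : ∀ z : ℤ, 0 < z → z < d → z ∉ E := by
      intro z h1 h2 hz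
      have hlt : z.natAbs < dn := by omega
      have := Nat.find_min hex hlt
      apply this
      constructor
      · omega
      · have : (z.natAbs : ℤ) = z := by omega
        rwa [this]
    -- every x ∈ E: residue mod 2d is 0 or d
    have hres : ∀ x ∈ E, x % (2 * d) = 0 ∨ x % (2 * d) = d := by
      intro x hx
      set r := x % (2 * d) with hr
      have h2d : 0 < 2 * d := by omega
      have hr0 : 0 ≤ r := Int.emod_nonneg x (by omega)
      have hrlt : r < 2 * d := Int.emod_lt_of_pos x h2d
      have hxeq : 2 * d * (x / (2 * d)) + r = x := Int.mul_ediv_add_emod x (2 * d)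
      have hrE : r ∈ E := by
        have := hstep x hx d hdmem (-(x / (2 * d)))
        have h : x + 2 * (-(x / (2 * d))) * d = r := by linarith [hxeq]
        rwa [h] at this
      rcases lt_trichotomy r d with h | h | h
      · left
        by_contra hne0
        exact hmin r (by omega) h hrE
      · right; exact h
      · exfalso
        have h1 : r - 2 * d ∈ E := by
          have := hsub r hrE d hdmem
          rwa [show r - 2 * d = r - 2 * d from rfl] at this
        have h2 : 2 * d - r ∈ E := by
          have := hneg _ h1
          rwa [show -(r - 2 * d) = 2 * d - r by ring] at this
        exact hmin (2 * d - r) (by omega) (by omega) h2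
    have hdvd : ∀ x ∈ E, d ∣ x := by
      intro x hx
      have h := hres x hx
      have hxeq : 2 * d * (x / (2 * d)) + x % (2 * d) = x := Int.mul_ediv_add_emod x (2 * d)
      rcases h with h | h
      · exact ⟨2 * (x / (2 * d)), by linarith [hxeq]⟩
      · exact ⟨2 * (x / (2 * d)) + 1, by linarith [hxeq]⟩
    refine ⟨d, le_of_lt hdpos', ?_⟩
    by_cases h0E : (0 : ℤ) ∈ E
    · left
      ext x
      simp only [Set.mem_setOf_eq]
      constructor
      · exact hdvd x
      · rintro ⟨m, rfl⟩
        rcases Int.even_or_odd m with ⟨k, hk⟩ | ⟨k, hk⟩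
        · have := hstep 0 h0E d hdmem k
          rwa [show (0 : ℤ) + 2 * k * d = d * m by rw [hk]; ring] at this
        · have := hstep d hdmem d hdmem k
          rwa [show d + 2 * k * d = d * m by rw [hk]; ring] at this
    · right
      ext x
      simp only [Set.mem_setOf_eq]
      constructor
      · intro hx
        obtain ⟨m, hm⟩ := hdvd x hx
        rcases Int.even_or_odd m with ⟨k, hk⟩ | ⟨k, hk⟩
        · exfalso
          have := hstep x hx d hdmem (-k)
          have h : x + 2 * (-k) * d = 0 := by rw [hm, hk]; ring
          rw [h] at this
          exact h0E this
        · exact ⟨k, by rw [hm, hk]⟩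
      · rintro ⟨k, rfl⟩
        have := hstep d hdmem d hdmem k
        rwa [show d + 2 * k * d = d * (2 * k + 1) by ring] at this
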